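/- Let S = {S_1,…,S_K} ⊂ ℂ^{d×d} with ρ(S) = 1, and let ‖·‖ be a matrix norm induced by a vector norm on ℂ^d which is extremal for S, i.e., max_{1 ≤ k ≤ K} ‖S_k‖ = 1. Let μ_* be a θ-ergodic Borel probability measure on Σ_K^+ extremal for S, and suppose μ_* has a periodic density point i' = (i'_n)_{n≥1} with period π ≥ 1 (i'_{n+π} = i'_n for all n). Then ‖(S_{i'_1} S_{i'_2} ⋯ S_{i'_π})^n‖ = 1 for every n ≥ 1, and consequently ρ(S_{i'_1}⋯S_{i'_π}) = 1 = ρ(S)^π, so S has the spectral finiteness property. -/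

import Mathlib

open Filter MeasureTheory Topology
open scoped ENNReal

noncomputable section

/-- The one-sided shift on `Σ_K^+ = ℕ → Fin K`. -/
def shift (K : ℕ) : (ℕ → Fin K) → ℕ → Fin K := fun i n => i (n + 1)

/-- The ordered product `S_{w 0} ⋯ S_{w (n-1)}` along a finite word `w`. -/
def finWordProd {d K : ℕ} (S : Fin K → Matrix (Fin d) (Fin d) ℂ) {n : ℕ}
    (w : Fin n → Fin K) : Matrix (Fin d) (Fin d) ℂ :=
  (List.ofFn fun t => S (w t)).prod

/-- The ordered product of the first `n` matrices along an infinite sequence. -/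
def wordProd {d K : ℕ} (S : Fin K → Matrix (Fin d) (Fin d) ℂ)
    (i : ℕ → Fin K) (n : ℕ) : Matrix (Fin d) (Fin d) ℂ :=
  (List.ofFn fun t : Fin n => S (i t)).prod

/-- The (usual) spectral radius of a complex matrix, as a real number. -/
def specRad {d : ℕ} (A : Matrix (Fin d) (Fin d) ℂ) : ℝ :=
  (spectralRadius ℂ A).toReal

/-- The generalized spectral radius of a finite family of matrices. -/
def genSpecRad {d K : ℕ} (S : Fin K → Matrix (Fin d) (Fin d) ℂ) : ℝ :=
  Filter.atTop.limsup fun n : ℕ =>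
    ⨆ w : Fin n → Fin K, specRad (finWordProd S w) ^ ((n : ℝ)⁻¹)

/-- A submultiplicative matrix norm on `d × d` complex matrices. -/
structure MatrixNorm (d : ℕ) where
  N : Matrix (Fin d) (Fin d) ℂ → ℝ
  nonneg : ∀ A, 0 ≤ N A
  definite : ∀ A, N A = 0 ↔ A = 0
  homog : ∀ (c : ℂ) (A), N (c • A) = ‖c‖ * N A
  triangle : ∀ A B, N (A + B) ≤ N A + N B
  submult : ∀ A B, N (A * B) ≤ N A * N B

/-- `μ` is extremal for `S` (w.r.t. the matrix norm `N`). -/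
def IsExtremal {d K : ℕ} (S : Fin K → Matrix (Fin d) (Fin d) ℂ)
    (N : Matrix (Fin d) (Fin d) ℂ → ℝ) (μ : Measure (ℕ → Fin K)) : Prop :=
  ∀ᵐ i ∂μ, Tendsto (fun n : ℕ => N (wordProd S i n) ^ ((n : ℝ)⁻¹))
    atTop (𝓝 (genSpecRad S))

/-- `x` is a density point of `μ`. -/
def DensityPoint {K : ℕ} (μ : Measure (ℕ → Fin K)) (x : ℕ → Fin K) : Prop :=
  ∀ U : Set (ℕ → Fin K), IsOpen U → x ∈ U → 0 < μ U

/-- `S` has the spectral finiteness property. -/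
def HasFinitenessProperty {d K : ℕ} (S : Fin K → Matrix (Fin d) (Fin d) ℂ) : Prop :=
  ∃ n : ℕ, 1 ≤ n ∧ ∃ w : Fin n → Fin K,
    genSpecRad S = specRad (finWordProd S w) ^ ((n : ℝ)⁻¹)

/-- `x` is periodic of period `π ≥ 1`. -/
def IsPeriodic {K : ℕ} (x : ℕ → Fin K) (π : ℕ) : Prop :=
  1 ≤ π ∧ ∀ n, x (n + π) = x n

/-- The matrix norm induced by a vector norm `Nv` on `ℂ^d`. -/
def inducedMatNorm {d : ℕ} (Nv : (Fin d → ℂ) → ℝ) (A : Matrix (Fin d) (Fin d) ℂ) : ℝ :=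
  sInf {c : ℝ | 0 ≤ c ∧ ∀ x, Nv (A.mulVec x) ≤ c * Nv x}

section WordLemmas

variable {d K : ℕ} (S : Fin K → Matrix (Fin d) (Fin d) ℂ)

lemma shift_iterate (i : ℕ → Fin K) (a t : ℕ) : (shift K)^[a] i t = i (t + a) := by
  induction a generalizing i t with
  | zero => rfl
  | succ a ih =>
    rw [Function.iterate_succ_apply, ih]
    rfl

lemma wordProd_add (i : ℕ → Fin K) (a b : ℕ) :
    wordProd S i (a + b) = wordProd S i a * wordProd S ((shift K)^[a] i) b := by
  unfold wordProd
  rw [List.ofFn_add, List.prod_append]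
  congr 1
  refine congrArg List.prod (congrArg List.ofFn (funext fun t => ?_))
  rw [shift_iterate]
  show S (i (↑(Fin.natAdd a t))) = S (i (↑t + a))
  congr 1
  simp [Fin.coe_natAdd, Nat.add_comm]

lemma wordProd_one (i : ℕ → Fin K) : wordProd S i 1 = S (i 0) := by
  simp [wordProd]

lemma wordProd_succ (i : ℕ → Fin K) (n : ℕ) :
    wordProd S i (n + 1) = wordProd S i n * S (i n) := by
  rw [wordProd_add, wordProd_one, shift_iterate]
  norm_num

lemma wordProd_congr {i j : ℕ → Fin K} (n : ℕ) (h : ∀ t, t < n → i t = j t) :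
    wordProd S i n = wordProd S j n := by
  unfold wordProd
  refine congrArg List.prod (congrArg List.ofFn (funext fun t => ?_))
  rw [h t t.isLt]

lemma finWordProd_eq (i : ℕ → Fin K) (n : ℕ) :
    finWordProd S (fun t : Fin n => i t) = wordProd S i n := rfl

end WordLemmas

section Periodic

variable {d K : ℕ} (S : Fin K → Matrix (Fin d) (Fin d) ℂ)

lemma periodic_block {i' : ℕ → Fin K} {π : ℕ} (hper : ∀ n, i' (n + π) = i' n)
    (t n : ℕ) : i' (t + n * π) = i' t := by
  induction n with
  | zero => simp
  | succ n ih =>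
    have : t + (n + 1) * π = (t + n * π) + π := by ring
    rw [this, hper, ih]

lemma shift_iterate_periodic {i' : ℕ → Fin K} {π : ℕ} (hper : ∀ n, i' (n + π) = i' n)
    (n : ℕ) : (shift K)^[n * π] i' = i' := by
  funext t
  rw [shift_iterate, periodic_block hper]

lemma wordProd_pow {i' : ℕ → Fin K} {π : ℕ} (hper : ∀ n, i' (n + π) = i' n) (n : ℕ) :
    wordProd S i' (n * π) = (wordProd S i' π) ^ n := by
  induction n with
  | zero => simp [wordProd]
  | succ n ih =>
    have h1 : (n + 1) * π = n * π + π := by ring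
    rw [h1, wordProd_add, shift_iterate_periodic hper, ih, pow_succ]

end Periodic

section Combinatorics

lemma greedy_select (m : ℕ) (hm : 1 ≤ m) (T : Finset ℕ) :
    ∃ l : List ℕ, l.Pairwise (fun a b => a + m ≤ b) ∧ (∀ p ∈ l, p ∈ T) ∧
      T.card ≤ m * l.length := by
  induction T using Finset.strongInductionOn with
  | _ T ih =>
    rcases T.eq_empty_or_nonempty with rfl | hT
    · exact ⟨[], by simp, by simp, by simp⟩
    · set p := T.min' hT with hp
      have hpT : p ∈ T := T.min'_mem hT
      set T' := T.filter (fun x => p + m ≤ x) with hT'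
      have hss : T' ⊂ T := by
        refine Finset.ssubset_iff_of_subset (Finset.filter_subset _ _) |>.mpr ⟨p, hpT, ?_⟩
        simp only [hT', Finset.mem_filter]
        omega
      obtain ⟨l, hpw, hmem, hcard⟩ := ih T' hss
      refine ⟨p :: l, ?_, ?_, ?_⟩
      · exact List.Pairwise.cons
          (fun b hb => (Finset.mem_filter.mp (hmem b hb)).2) hpw
      · intro x hx
        rcases List.mem_cons.mp hx with rfl | hx
        · exact hpT
        · exact Finset.filter_subset _ _ (hmem x hx)
      · have hsplit := Finset.card_filter_add_card_filter_not
          (s := T) (p := fun x => p + m ≤ x)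
        have hneg : T.filter (fun x => ¬ (p + m ≤ x)) ⊆ Finset.Ico p (p + m) := by
          intro x hx
          obtain ⟨hxT, hx2⟩ := Finset.mem_filter.mp hx
          exact Finset.mem_Ico.mpr ⟨T.min'_le x hxT, by omega⟩
        have hnegcard : (T.filter (fun x => ¬ (p + m ≤ x))).card ≤ m := by
          calc (T.filter (fun x => ¬ (p + m ≤ x))).card
              ≤ (Finset.Ico p (p + m)).card := Finset.card_le_card hneg
            _ = m := by rw [Nat.card_Ico]; omega
        have hsplit' : (T.filter (fun x => p + m ≤ x)).card
            + (T.filter (fun x => ¬ (p + m ≤ x))).card = T.card := by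
          simpa using hsplit
        have : T.card ≤ T'.card + m := by rw [hT']; omega
        calc T.card ≤ T'.card + m := this
          _ ≤ m * l.length + m := by omega
          _ = m * (p :: l).length := by simp [List.length_cons]; ring

end Combinatorics

section ChainBound

variable {d K : ℕ}

lemma chain_prod_bound (S : Fin K → Matrix (Fin d) (Fin d) ℂ)
    (N : Matrix (Fin d) (Fin d) ℂ → ℝ)
    (hmul : ∀ A B, N (A * B) ≤ N A * N B) (hnn : ∀ A, 0 ≤ N A)
    (hword1 : ∀ (i : ℕ → Fin K) (q : ℕ), N (wordProd S i q) ≤ 1)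
    (m : ℕ) (β : ℝ) (hβ0 : 0 ≤ β) :
    ∀ (L : ℕ) (l : List ℕ), l.length = L → ∀ (i : ℕ → Fin K) (q : ℕ),
      l.Pairwise (fun a b => a + m ≤ b) →
      (∀ p ∈ l, p + m ≤ q) →
      (∀ p ∈ l, N (wordProd S ((shift K)^[p] i) m) ≤ β) →
      N (wordProd S i q) ≤ β ^ l.length := by
  intro L
  induction L with
  | zero =>
    intro l hl i q _ _ _
    rw [List.length_eq_zero_iff.mp hl]
    simpa using hword1 i q
  | succ L ih =>
    intro l hl i q hpw hle hblk
    obtain ⟨p, l', rfl⟩ : ∃ p l', l = p :: l' := by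
      cases l with
      | nil => simp at hl
      | cons p l' => exact ⟨p, l', rfl⟩
    have hl' : l'.length = L := by simpa using hl
    obtain ⟨hhead, hpw'⟩ := List.pairwise_cons.mp hpw
    have hpm : p + m ≤ q := hle p List.mem_cons_self
    -- decompose q = (p + m) + r
    set r := q - (p + m) with hr
    have hq : q = p + m + r := by omega
    have hsplit : wordProd S i q
        = wordProd S i p * wordProd S ((shift K)^[p] i) m
          * wordProd S ((shift K)^[p + m] i) r := by
      rw [hq]
      have h1 : p + m + r = p + (m + r) := by ring
      rw [h1, wordProd_add, wordProd_add, ← mul_assoc,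
        ← Function.iterate_add_apply, Nat.add_comm m p]
    -- the mapped tail
    set l'' := l'.map (fun x => x - (p + m)) with hl''
    have hmem' : ∀ x ∈ l', p + m ≤ x := hhead
    have hpw'' : l''.Pairwise (fun a b => a + m ≤ b) := by
      rw [hl'', List.pairwise_map]
      refine hpw'.imp_of_mem ?_
      intro a b ha hb hab
      have := hmem' a ha
      omega
    have hlen'' : l''.length = L := by simp [hl'', hl']
    have hle'' : ∀ x ∈ l'', x + m ≤ r := by
      intro x hx
      rw [hl'', List.mem_map] at hx
      obtain ⟨y, hy, rfl⟩ := hx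
      have h1 := hmem' y hy
      have h2 := hle y (List.mem_cons_of_mem _ hy)
      omega
    have hblk'' : ∀ x ∈ l'', N (wordProd S ((shift K)^[x] ((shift K)^[p + m] i)) m) ≤ β := by
      intro x hx
      rw [hl'', List.mem_map] at hx
      obtain ⟨y, hy, rfl⟩ := hx
      rw [← Function.iterate_add_apply]
      have h1 := hmem' y hy
      have h2 : y - (p + m) + (p + m) = y := by omega
      rw [h2]
      exact hblk y (List.mem_cons_of_mem _ hy)
    have hrec := ih l'' hlen'' ((shift K)^[p + m] i) r hpw'' hle'' hblk''
    rw [hsplit]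
    have hb1 : N (wordProd S i p * wordProd S ((shift K)^[p] i) m) ≤ β := by
      calc N (wordProd S i p * wordProd S ((shift K)^[p] i) m)
          ≤ N (wordProd S i p) * N (wordProd S ((shift K)^[p] i) m) := hmul _ _
        _ ≤ 1 * β := by
            apply mul_le_mul (hword1 i p) (hblk p List.mem_cons_self) (hnn _) zero_le_one
        _ = β := one_mul β
    calc N (wordProd S i p * wordProd S ((shift K)^[p] i) m
            * wordProd S ((shift K)^[p + m] i) r)
        ≤ N (wordProd S i p * wordProd S ((shift K)^[p] i) m)
          * N (wordProd S ((shift K)^[p + m] i) r) := hmul _ _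
      _ ≤ β * β ^ l''.length := by
          apply mul_le_mul hb1 hrec (hnn _) hβ0
      _ = β ^ (p :: l').length := by
          rw [hlen'', List.length_cons, hl', pow_succ]
          ring

end ChainBound


section NormFacts

/-- Type synonym for `Fin d → ℂ` carrying the norm `Nv`. -/
def EVec (d : ℕ) : Type := Fin d → ℂ

instance (d : ℕ) : AddCommGroup (EVec d) := inferInstanceAs (AddCommGroup (Fin d → ℂ))
instance (d : ℕ) : Module ℂ (EVec d) := inferInstanceAs (Module ℂ (Fin d → ℂ))
instance (d : ℕ) : FiniteDimensional ℂ (EVec d) :=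
  inferInstanceAs (FiniteDimensional ℂ (Fin d → ℂ))

lemma inducedMatNorm_facts {d : ℕ} (hd : 2 ≤ d) (Nv : (Fin d → ℂ) → ℝ)
    (hNnn : ∀ x, 0 ≤ Nv x)
    (hNdef : ∀ x, (Nv x = 0 ↔ x = 0))
    (hNhom : ∀ (c : ℂ) (x), Nv (c • x) = ‖c‖ * Nv x)
    (hNtri : ∀ x y, Nv (x + y) ≤ Nv x + Nv y) :
    (∀ A B : Matrix (Fin d) (Fin d) ℂ,
        inducedMatNorm Nv (A * B) ≤ inducedMatNorm Nv A * inducedMatNorm Nv B) ∧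
    (∀ A : Matrix (Fin d) (Fin d) ℂ, 0 ≤ inducedMatNorm Nv A) ∧
    inducedMatNorm Nv (1 : Matrix (Fin d) (Fin d) ℂ) = 1 ∧
    (∀ A : Matrix (Fin d) (Fin d) ℂ,
        (∀ q : ℕ, 1 ≤ q → inducedMatNorm Nv (A ^ q) = 1) → specRad A = 1) := by
  letI : NormedAddCommGroup (EVec d) := AddGroupNorm.toNormedAddCommGroup
    { toFun := fun x => Nv x
      map_zero' := (hNdef 0).mpr rfl
      add_le' := hNtri
      neg' := fun x => by
        have h := hNhom (-1) x
        have e : ((-1 : ℂ) • x : Fin d → ℂ) = -(x : Fin d → ℂ) := by funext j; simp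
        exact (congrArg Nv e.symm).trans (h.trans (by simp))
      eq_zero_of_map_eq_zero' := fun x h => (hNdef x).mp h }
  letI : NormedSpace ℂ (EVec d) := ⟨fun c x => le_of_eq (hNhom c x)⟩
  haveI : CompleteSpace (EVec d) := FiniteDimensional.complete ℂ (EVec d)
  haveI : Nontrivial (EVec d) := by
    refine ⟨(0 : Fin d → ℂ), (fun _ => 1 : Fin d → ℂ), fun h => ?_⟩
    have := congrFun h ⟨0, by omega⟩
    simp at this
  let e0 : Matrix (Fin d) (Fin d) ℂ ≃ₐ[ℂ] (EVec d →ₗ[ℂ] EVec d) := Matrix.toLinAlgEquiv'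
  let e1 : (EVec d →ₗ[ℂ] EVec d) ≃ₐ[ℂ] (EVec d →L[ℂ] EVec d) :=
    AlgEquiv.ofLinearEquiv LinearMap.toContinuousLinearMap rfl (fun f g => rfl)
  let e : Matrix (Fin d) (Fin d) ℂ ≃ₐ[ℂ] (EVec d →L[ℂ] EVec d) := e0.trans e1
  have hkey : ∀ A : Matrix (Fin d) (Fin d) ℂ, inducedMatNorm Nv A = ‖e A‖ := by
    intro A
    rw [ContinuousLinearMap.norm_def]
    rfl
  have hmul : ∀ A B : Matrix (Fin d) (Fin d) ℂ,
      inducedMatNorm Nv (A * B) ≤ inducedMatNorm Nv A * inducedMatNorm Nv B := by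
    intro A B
    rw [hkey, hkey, hkey, map_mul]
    exact norm_mul_le _ _
  have hnn : ∀ A : Matrix (Fin d) (Fin d) ℂ, 0 ≤ inducedMatNorm Nv A := by
    intro A; rw [hkey]; exact norm_nonneg _
  have hone : inducedMatNorm Nv (1 : Matrix (Fin d) (Fin d) ℂ) = 1 := by
    rw [hkey, map_one]
    exact norm_one
  refine ⟨hmul, hnn, hone, ?_⟩
  intro A hA
  have hsp : spectralRadius ℂ A = spectralRadius ℂ (e A) := by
    unfold spectralRadius
    rw [AlgEquiv.spectrum_eq]
  have hG := spectrum.pow_nnnorm_pow_one_div_tendsto_nhds_spectralRadius (e A)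
  have hconst : (fun q : ℕ => (‖(e A) ^ q‖₊ : ℝ≥0∞) ^ (1 / (q : ℝ)))
      =ᶠ[atTop] (fun _ => (1 : ℝ≥0∞)) := by
    filter_upwards [eventually_ge_atTop 1] with q hq
    have h1 : (e A) ^ q = e (A ^ q) := (map_pow e A q).symm
    have h2 : ‖e (A ^ q)‖ = 1 := by rw [← hkey]; exact hA q hq
    have h3 : ‖(e A) ^ q‖₊ = 1 := by
      rw [h1]
      ext
      simpa using h2
    rw [h3]
    simp
  have hlim : Tendsto (fun q : ℕ => (‖(e A) ^ q‖₊ : ℝ≥0∞) ^ (1 / (q : ℝ)))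
      atTop (𝓝 (1 : ℝ≥0∞)) := by
    rw [tendsto_congr' hconst]
    exact tendsto_const_nhds
  have : spectralRadius ℂ (e A) = 1 := tendsto_nhds_unique hG hlim
  rw [specRad, hsp, this]
  simp

end NormFacts

section MeasurePart

variable {K : ℕ}

/-- The cylinder around `i'` of length `m`. -/
def cyl (i' : ℕ → Fin K) (m : ℕ) : Set (ℕ → Fin K) := {j | ∀ t, t < m → j t = i' t}

/-- The number of `k < q` where the word of length `m` starting at position `k` in `i`
matches the beginning of `i'`. -/
def visits (i' : ℕ → Fin K) (m q : ℕ) (i : ℕ → Fin K) : ℕ :=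
  ((Finset.range q).filter (fun k => ∀ t, t < m → i (k + t) = i' t)).card

lemma measurable_block (i' : ℕ → Fin K) (m k : ℕ) :
    MeasurableSet {i : ℕ → Fin K | ∀ t, t < m → i (k + t) = i' t} := by
  have h : {i : ℕ → Fin K | ∀ t, t < m → i (k + t) = i' t}
      = ⋂ (t : ℕ) (_ : t < m), (fun i : ℕ → Fin K => i (k + t)) ⁻¹' {i' t} := by
    ext i; simp [Set.mem_iInter]
  rw [h]
  exact MeasurableSet.iInter fun t => MeasurableSet.iInter fun _ =>
    (measurable_pi_apply _) (measurableSet_singleton _)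

lemma cyl_eq (i' : ℕ → Fin K) (m : ℕ) :
    cyl i' m = {i : ℕ → Fin K | ∀ t, t < m → i (0 + t) = i' t} := by
  ext i; simp [cyl]

lemma measurable_cyl (i' : ℕ → Fin K) (m : ℕ) : MeasurableSet (cyl i' m) := by
  rw [cyl_eq]; exact measurable_block i' m 0

lemma measurable_shift : Measurable (shift K) :=
  measurable_pi_lambda _ fun n => measurable_pi_apply (n + 1)

lemma block_eq_preimage (i' : ℕ → Fin K) (m k : ℕ) :
    {i : ℕ → Fin K | ∀ t, t < m → i (k + t) = i' t} = (shift K)^[k] ⁻¹' (cyl i' m) := by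
  ext i
  simp only [Set.mem_setOf_eq, Set.mem_preimage, cyl, shift_iterate]
  constructor
  · intro h t ht; rw [Nat.add_comm]; exact h t ht
  · intro h t ht; rw [Nat.add_comm]; exact h t ht

lemma measure_block {μ : Measure (ℕ → Fin K)}
    (hmp : MeasurePreserving (shift K) μ μ) (i' : ℕ → Fin K) (m k : ℕ) :
    μ {i : ℕ → Fin K | ∀ t, t < m → i (k + t) = i' t} = μ (cyl i' m) := by
  rw [block_eq_preimage]
  exact (hmp.iterate k).measure_preimage (measurable_cyl i' m).nullMeasurableSet

lemma visits_cast (i' : ℕ → Fin K) (m q : ℕ) (i : ℕ → Fin K) :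
    (visits i' m q i : ℝ≥0∞)
      = ∑ k ∈ Finset.range q,
          Set.indicator {j : ℕ → Fin K | ∀ t, t < m → j (k + t) = i' t}
            (fun _ => (1 : ℝ≥0∞)) i := by
  rw [visits, Finset.card_filter, Nat.cast_sum]
  refine Finset.sum_congr rfl fun k _ => ?_
  by_cases h : ∀ t, t < m → i (k + t) = i' t
  · rw [if_pos h,
      Set.indicator_of_mem (show i ∈ {j : ℕ → Fin K | ∀ t, t < m → j (k + t) = i' t} from h)]
    simp
  · rw [if_neg h,
      Set.indicator_of_notMem (show i ∉ {j : ℕ → Fin K | ∀ t, t < m → j (k + t) = i' t} from h)]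
    simp

lemma measurable_visits_cast (i' : ℕ → Fin K) (m q : ℕ) :
    Measurable (fun i => (visits i' m q i : ℝ≥0∞)) := by
  simp only [visits_cast]
  exact Finset.measurable_sum _ fun k _ =>
    Measurable.indicator measurable_const (measurable_block i' m k)

lemma lintegral_visits {μ : Measure (ℕ → Fin K)}
    (hmp : MeasurePreserving (shift K) μ μ) (i' : ℕ → Fin K) (m q : ℕ) :
    ∫⁻ i, (visits i' m q i : ℝ≥0∞) ∂μ = q * μ (cyl i' m) := by
  simp only [visits_cast]
  rw [MeasureTheory.lintegral_finset_sum _ fun k _ =>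
    Measurable.indicator measurable_const (measurable_block i' m k)]
  have : ∀ k ∈ Finset.range q,
      ∫⁻ i, Set.indicator {j : ℕ → Fin K | ∀ t, t < m → j (k + t) = i' t}
        (fun _ => (1 : ℝ≥0∞)) i ∂μ = μ (cyl i' m) := by
    intro k _
    rw [MeasureTheory.lintegral_indicator (measurable_block i' m k)]
    simp [measure_block hmp i' m k]
  rw [Finset.sum_congr rfl this, Finset.sum_const, Finset.card_range, nsmul_eq_mul]

lemma markov_visits {μ : Measure (ℕ → Fin K)} [IsProbabilityMeasure μ]
    (hmp : MeasurePreserving (shift K) μ μ) (i' : ℕ → Fin K) (m q : ℕ) (hq : q ≠ 0) :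
    μ (cyl i' m) / 2
      ≤ μ {i | (q : ℝ≥0∞) * μ (cyl i' m) ≤ 2 * (visits i' m q i : ℝ≥0∞)} := by
  set α := μ (cyl i' m) with hα
  set W := {i | (q : ℝ≥0∞) * α ≤ 2 * (visits i' m q i : ℝ≥0∞)} with hW
  have hWmeas : MeasurableSet W :=
    measurableSet_le measurable_const ((measurable_visits_cast i' m q).const_mul 2)
  have hpt : ∀ i, (visits i' m q i : ℝ≥0∞)
      ≤ W.indicator (fun _ => (q : ℝ≥0∞)) i + (q : ℝ≥0∞) * α / 2 := by
    intro i
    by_cases hi : i ∈ W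
    · rw [Set.indicator_of_mem hi]
      refine le_add_of_le_of_nonneg ?_ zero_le
      exact_mod_cast Nat.cast_le.mpr
        (le_trans (Finset.card_filter_le _ _) (le_of_eq (Finset.card_range q)))
    · rw [Set.indicator_of_notMem hi, zero_add]
      have h2 : 2 * (visits i' m q i : ℝ≥0∞) ≤ (q : ℝ≥0∞) * α := le_of_not_ge hi
      rw [ENNReal.le_div_iff_mul_le (Or.inl two_ne_zero) (Or.inl ENNReal.ofNat_ne_top)]
      rw [mul_comm]
      exact h2
  have hint : (q : ℝ≥0∞) * α ≤ (q : ℝ≥0∞) * μ W + (q : ℝ≥0∞) * α / 2 := by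
    calc (q : ℝ≥0∞) * α = ∫⁻ i, (visits i' m q i : ℝ≥0∞) ∂μ :=
          (lintegral_visits hmp i' m q).symm
      _ ≤ ∫⁻ i, (W.indicator (fun _ => (q : ℝ≥0∞)) i + (q : ℝ≥0∞) * α / 2) ∂μ :=
          MeasureTheory.lintegral_mono hpt
      _ = (q : ℝ≥0∞) * μ W + (q : ℝ≥0∞) * α / 2 := by
          rw [MeasureTheory.lintegral_add_left
            (Measurable.indicator measurable_const hWmeas)]
          rw [MeasureTheory.lintegral_indicator hWmeas, MeasureTheory.lintegral_const]
          simp [MeasureTheory.measure_univ]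
  have hfin : (q : ℝ≥0∞) * α ≠ ∞ :=
    ENNReal.mul_ne_top (ENNReal.natCast_ne_top q) (measure_ne_top μ _)
  have hsub : (q : ℝ≥0∞) * α / 2 ≤ (q : ℝ≥0∞) * μ W := by
    have := tsub_le_iff_right.mpr hint
    rwa [ENNReal.sub_half hfin] at this
  have hdiv : (q : ℝ≥0∞) * (α / 2) ≤ (q : ℝ≥0∞) * μ W := by
    rwa [← mul_div_assoc]
  exact (ENNReal.mul_le_mul_iff_right (by exact_mod_cast hq) (ENNReal.natCast_ne_top q)).mp hdiv

end MeasurePart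


lemma isOpen_cyl {K : ℕ} (i' : ℕ → Fin K) (m : ℕ) : IsOpen (cyl i' m) := by
  have h : cyl i' m = ⋂ t ∈ Finset.range m, (fun j : ℕ → Fin K => j t) ⁻¹' {i' t} := by
    ext j; simp [cyl]
  rw [h]
  apply isOpen_biInter_finset
  intro t _
  exact (continuous_apply t).isOpen_preimage _ (isOpen_discrete _)

lemma measurable_norm_word {d K : ℕ} (S : Fin K → Matrix (Fin d) (Fin d) ℂ)
    (N : Matrix (Fin d) (Fin d) ℂ → ℝ) (q : ℕ) :
    Measurable fun i : ℕ → Fin K => N (wordProd S i q) ^ ((q : ℝ)⁻¹) := by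
  have heq : (fun i : ℕ → Fin K => N (wordProd S i q) ^ ((q : ℝ)⁻¹))
      = (fun w : Fin q → Fin K => N (finWordProd S w) ^ ((q : ℝ)⁻¹))
        ∘ (fun i => fun t : Fin q => i (t : ℕ)) := rfl
  rw [heq]
  exact (measurable_of_countable _).comp
    (measurable_pi_lambda _ fun t => measurable_pi_apply _)


/-- If `ρ(S) = 1`, `‖·‖` is an extremal induced matrix norm for `S`, and an extremal
ergodic probability measure `μ` for `S` has a periodic density point `i'` of period `π`,
then all powers of `S_{i'_1} ⋯ S_{i'_π}` have norm one; consequently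
`ρ(S_{i'_1} ⋯ S_{i'_π}) = 1 = ρ(S)^π` and `S` has the spectral finiteness property. -/
theorem finiteness_of_periodic_density_point
    {d K : ℕ} (hd : 2 ≤ d) (hK : 2 ≤ K)
    (S : Fin K → Matrix (Fin d) (Fin d) ℂ)
    (Nv : (Fin d → ℂ) → ℝ)
    (hNnn : ∀ x, 0 ≤ Nv x)
    (hNdef : ∀ x, (Nv x = 0 ↔ x = 0))
    (hNhom : ∀ (c : ℂ) (x), Nv (c • x) = ‖c‖ * Nv x)
    (hNtri : ∀ x y, Nv (x + y) ≤ Nv x + Nv y)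
    (hρ : genSpecRad S = 1)
    (hextnorm : (⨆ k : Fin K, inducedMatNorm Nv (S k)) = 1)
    (μ : Measure (ℕ → Fin K)) [IsProbabilityMeasure μ]
    (hergo : Ergodic (shift K) μ) (hext : IsExtremal S (inducedMatNorm Nv) μ)
    (i' : ℕ → Fin K) (π : ℕ) (hper : IsPeriodic i' π) (hdens : DensityPoint μ i') :
    (∀ n : ℕ, 1 ≤ n →
      inducedMatNorm Nv ((finWordProd S fun t : Fin π => i' t) ^ n) = 1) ∧
    specRad (finWordProd S fun t : Fin π => i' t) = 1 ∧
    specRad (finWordProd S fun t : Fin π => i' t) = genSpecRad S ^ π ∧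
    HasFinitenessProperty S := by
  classical
  obtain ⟨hmul, hnn, hone, hspec⟩ := inducedMatNorm_facts hd Nv hNnn hNdef hNhom hNtri
  have hπ1 : 1 ≤ π := hper.1
  have hperfun : ∀ n, i' (n + π) = i' n := hper.2
  -- each generator has norm at most one
  have hSk : ∀ k, inducedMatNorm Nv (S k) ≤ 1 := by
    intro k
    rw [← hextnorm]
    exact le_ciSup (f := fun k => inducedMatNorm Nv (S k))
      (Set.finite_range _).bddAbove k
  -- all word products have norm at most one
  have hword1 : ∀ (i : ℕ → Fin K) (q : ℕ), inducedMatNorm Nv (wordProd S i q) ≤ 1 := by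
    intro i q
    induction q with
    | zero => exact le_of_eq hone
    | succ q ih =>
      rw [wordProd_succ]
      calc inducedMatNorm Nv (wordProd S i q * S (i q))
          ≤ inducedMatNorm Nv (wordProd S i q) * inducedMatNorm Nv (S (i q)) := hmul _ _
        _ ≤ 1 := mul_le_one₀ ih (hnn _) (hSk _)
  have hPow : ∀ n : ℕ, (finWordProd S fun t : Fin π => i' t) ^ n = wordProd S i' (n * π) := by
    intro n
    rw [finWordProd_eq, ← wordProd_pow S hperfun]
  -- THE KEY STEP
  have key : ∀ n : ℕ, 1 ≤ n → inducedMatNorm Nv (wordProd S i' (n * π)) = 1 := by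
    intro n hn
    set m := n * π with hm
    have hm1 : 1 ≤ m := by
      have := Nat.mul_le_mul hn hπ1
      simpa [hm] using this
    have hβle : inducedMatNorm Nv (wordProd S i' m) ≤ 1 := hword1 i' m
    rcases lt_or_ge (inducedMatNorm Nv (wordProd S i' m)) 1 with hlt | hge
    swap
    · exact le_antisymm hβle hge
    exfalso
    set β' := max (inducedMatNorm Nv (wordProd S i' m)) (1/2 : ℝ) with hβ'
    have hβ'0 : (0:ℝ) < β' := lt_of_lt_of_le (by norm_num) (le_max_right _ _)
    have hβ'1 : β' < 1 := max_lt hlt (by norm_num)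
    set L := Real.log β' with hLdef
    have hL : L < 0 := Real.log_neg hβ'0 hβ'1
    -- the cylinder has positive measure
    have hC0 : 0 < μ (cyl i' m) := hdens _ (isOpen_cyl i' m) (fun t _ => rfl)
    have hαtop : μ (cyl i' m) ≠ ∞ := measure_ne_top μ _
    set a := (μ (cyl i' m)).toReal with ha
    have ha0 : 0 < a := ENNReal.toReal_pos hC0.ne' hαtop
    -- Egorov
    have hae : ∀ᵐ i ∂μ, Tendsto
        (fun q : ℕ => inducedMatNorm Nv (wordProd S i q) ^ ((q : ℝ)⁻¹))
        atTop (𝓝 (1 : ℝ)) := by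
      have h := hext
      unfold IsExtremal at h
      rwa [hρ] at h
    have hsm : ∀ q : ℕ, StronglyMeasurable
        fun i : ℕ → Fin K => inducedMatNorm Nv (wordProd S i q) ^ ((q : ℝ)⁻¹) :=
      fun q => (measurable_norm_word S (inducedMatNorm Nv) q).stronglyMeasurable
    have hhalf : (0 : ℝ≥0∞) < μ (cyl i' m) / 2 :=
      ENNReal.div_pos hC0.ne' ENNReal.ofNat_ne_top
    obtain ⟨c, hc0, hcα⟩ := exists_between hhalf
    have hctop : c ≠ ∞ := hcα.ne_top
    set εr := c.toReal with hεr
    have hεr0 : 0 < εr := ENNReal.toReal_pos hc0.ne' hctop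
    obtain ⟨t, htmeas, htμ, hunif⟩ :=
      MeasureTheory.tendstoUniformlyOn_of_ae_tendsto' (μ := μ)
        (g := fun _ => (1 : ℝ)) hsm stronglyMeasurable_const hae hεr0
    have htc : μ t < μ (cyl i' m) / 2 := by
      refine lt_of_le_of_lt ?_ hcα
      rwa [hεr, ENNReal.ofReal_toReal hctop] at htμ
    -- uniform convergence threshold
    set γ := Real.exp ((a / (4 * m)) * L) with hγ
    have hγ0 : 0 < γ := Real.exp_pos _
    have hγ1 : γ < 1 := by
      rw [hγ, Real.exp_lt_one_iff]
      have hpos : (0:ℝ) < a / (4 * m) := by positivity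
      exact mul_neg_of_pos_of_neg hpos hL
    rw [Metric.tendstoUniformlyOn_iff] at hunif
    obtain ⟨Q₁, hQ₁⟩ := Filter.eventually_atTop.mp (hunif (1 - γ) (by linarith))
    -- choose q large
    obtain ⟨q₂, hq₂⟩ := exists_nat_gt (4 * (m:ℝ) / a)
    set q := max Q₁ (max q₂ 1) with hq
    have hqQ₁ : Q₁ ≤ q := le_max_left _ _
    have hq1 : 1 ≤ q := le_trans (le_max_right _ _) (le_max_right _ _)
    have hqa : 4 * (m:ℝ) < q * a := by
      have h1 : (q₂:ℝ) ≤ q := by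
        exact_mod_cast le_trans (le_max_left _ _) (le_max_right _ _)
      calc 4*(m:ℝ) = (4 * (m:ℝ) / a) * a := by field_simp
        _ < q₂ * a := mul_lt_mul_of_pos_right hq₂ ha0
        _ ≤ q * a := mul_le_mul_of_nonneg_right h1 ha0.le
    -- Markov inequality for the visit counts
    have hM := markov_visits hergo.toMeasurePreserving i' m q (by omega)
    -- find a point in W outside the bad set t
    have hWnotsub : ¬ ({i : ℕ → Fin K |
        (q : ℝ≥0∞) * μ (cyl i' m) ≤ 2 * (visits i' m q i : ℝ≥0∞)} ⊆ t) := by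
      intro hsub
      have h1 := measure_mono (μ := μ) hsub
      have h2 := le_trans hM h1
      exact absurd h2 (not_le.mpr htc)
    obtain ⟨i, hiW, hit⟩ := Set.not_subset.mp hWnotsub
    -- lower bound for the norm of the word along i
    have hfi : dist (1:ℝ)
        (inducedMatNorm Nv (wordProd S i q) ^ ((q : ℝ)⁻¹)) < 1 - γ := hQ₁ q hqQ₁ i hit
    have hγf : γ < inducedMatNorm Nv (wordProd S i q) ^ ((q : ℝ)⁻¹) := by
      rw [Real.dist_eq] at hfi
      have h1 := abs_lt.mp hfi
      linarith [h1.2]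
    have hNword : γ ^ q ≤ inducedMatNorm Nv (wordProd S i q) := by
      have h0 : (0:ℝ) ≤ inducedMatNorm Nv (wordProd S i q) := hnn _
      have h1 : (inducedMatNorm Nv (wordProd S i q) ^ ((q : ℝ)⁻¹)) ^ q
          = inducedMatNorm Nv (wordProd S i q) := by
        rw [← Real.rpow_natCast (inducedMatNorm Nv (wordProd S i q) ^ ((q : ℝ)⁻¹)) q,
          ← Real.rpow_mul h0, inv_mul_cancel₀ (by positivity : (q:ℝ) ≠ 0),
          Real.rpow_one]
      calc γ ^ q ≤ (inducedMatNorm Nv (wordProd S i q) ^ ((q : ℝ)⁻¹)) ^ q :=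
            pow_le_pow_left₀ hγ0.le hγf.le q
        _ = inducedMatNorm Nv (wordProd S i q) := h1
    -- visits lower bound in ℝ
    have hVa : (q:ℝ) * a ≤ 2 * (visits i' m q i : ℝ) := by
      have h2 := ENNReal.toReal_mono
        (ENNReal.mul_ne_top ENNReal.ofNat_ne_top (ENNReal.natCast_ne_top _)) hiW
      rw [ENNReal.toReal_mul, ENNReal.toReal_mul] at h2
      simpa using h2
    -- greedy selection of disjoint blocks
    set T := (Finset.range q).filter
      (fun k => (∀ t, t < m → i (k + t) = i' t) ∧ k + m ≤ q) with hT
    have hTcard : (visits i' m q i) ≤ T.card + m := by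
      have hsub : (Finset.range q).filter (fun k => ∀ t, t < m → i (k + t) = i' t)
          ⊆ T ∪ Finset.Ico (q - m) q := by
        intro k hk
        obtain ⟨hk1, hk2⟩ := Finset.mem_filter.mp hk
        by_cases h3 : k + m ≤ q
        · exact Finset.mem_union_left _ (Finset.mem_filter.mpr ⟨hk1, hk2, h3⟩)
        · refine Finset.mem_union_right _ ?_
          have h4 := Finset.mem_range.mp hk1
          exact Finset.mem_Ico.mpr ⟨by omega, by omega⟩
      calc visits i' m q i ≤ (T ∪ Finset.Ico (q - m) q).card := Finset.card_le_card hsub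
        _ ≤ T.card + (Finset.Ico (q - m) q).card := Finset.card_union_le _ _
        _ ≤ T.card + m := by rw [Nat.card_Ico]; omega
    obtain ⟨l, hpw, hmem, hcard⟩ := greedy_select m hm1 T
    have hblk : ∀ p ∈ l, inducedMatNorm Nv (wordProd S ((shift K)^[p] i) m) ≤ β' := by
      intro p hp
      obtain ⟨_, hmatch, _⟩ := Finset.mem_filter.mp (hmem p hp)
      have heq : wordProd S ((shift K)^[p] i) m = wordProd S i' m := by
        apply wordProd_congr
        intro s hs
        rw [shift_iterate, Nat.add_comm]
        exact hmatch s hs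
      rw [heq]
      exact le_max_left _ _
    have hle' : ∀ p ∈ l, p + m ≤ q := fun p hp => (Finset.mem_filter.mp (hmem p hp)).2.2
    have hchain := chain_prod_bound S (inducedMatNorm Nv) hmul hnn hword1 m β' hβ'0.le
      l.length l rfl i q hpw hle' hblk
    -- take logarithms and derive the contradiction
    have hβlog : γ ^ q ≤ β' ^ l.length := le_trans hNword hchain
    have hlog : (q:ℝ) * ((a / (4 * m)) * L) ≤ (l.length : ℝ) * L := by
      have h1 := Real.log_le_log (pow_pos hγ0 q) hβlog
      rwa [Real.log_pow, Real.log_pow, hγ, Real.log_exp, ← hLdef] at h1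
    have hlen1 : (l.length : ℝ) ≤ (q:ℝ) * (a / (4 * m)) := by
      have hL' : (0:ℝ) < -L := by linarith
      have h2 : (l.length : ℝ) * (-L) ≤ (q:ℝ) * (a / (4 * m)) * (-L) := by nlinarith [hlog]
      exact le_of_mul_le_mul_right h2 hL'
    have hlen2 : (q:ℝ) * a / 2 - m ≤ (m:ℝ) * l.length := by
      have h1 : (visits i' m q i : ℝ) ≤ (T.card : ℝ) + m := by exact_mod_cast hTcard
      have h2 : (T.card : ℝ) ≤ (m:ℝ) * l.length := by exact_mod_cast hcard
      linarith [hVa]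
    have hm0 : (0:ℝ) < m := by exact_mod_cast hm1
    have hlen3 : (m:ℝ) * l.length ≤ (q:ℝ) * a / 4 := by
      calc (m:ℝ) * l.length ≤ (m:ℝ) * ((q:ℝ) * (a / (4 * m))) :=
            mul_le_mul_of_nonneg_left hlen1 hm0.le
        _ = (q:ℝ) * a / 4 := by field_simp
    linarith
  -- wrap up
  have key' : ∀ n : ℕ, 1 ≤ n →
      inducedMatNorm Nv ((finWordProd S fun t : Fin π => i' t) ^ n) = 1 := by
    intro n hn
    rw [hPow]
    exact key n hn
  have hspecP : specRad (finWordProd S fun t : Fin π => i' t) = 1 := hspec _ key'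
  refine ⟨key', hspecP, ?_, ?_⟩
  · rw [hspecP, hρ, one_pow]
  · exact ⟨π, hπ1, fun t : Fin π => i' t, by rw [hρ, hspecP, Real.one_rpow]⟩
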